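/- Let A and B be n×n complex matrices with positive definite real parts, and let X be an n×n complex matrix. If the block matrix M = [[A, X],[X*, B]] is accretive (i.e., its real part (M+M*)/2 is positive semidefinite), then A − X B⁻¹ X* is accretive. -/

import Mathlib

open MeasureTheory Matrix
open scoped ComplexOrder

/-- The "real part" (Hermitian part) of a complex matrix: `(A + Aᴴ)/2`. -/
noncomputable def mre {m : Type*} (A : Matrix m m ℂ) : Matrix m m ℂ :=
  (1/2 : ℂ) • (A + Aᴴ)

/-- A matrix is accretive if its Hermitian part is positive semidefinite. -/
def Accretive {m : Type*} [Fintype m] (A : Matrix m m ℂ) : Prop :=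
  (mre A).PosSemidef

/-- Principal fractional power `A ^ t` of a matrix whose spectrum avoids `(-∞, 0]`,
given (for `0 < t < 1`) by the standard integral formula
`A^t = (sin (tπ)/π) ∫₀^∞ s^(t-1) A (A + s I)⁻¹ ds`. -/
noncomputable def apow {m : Type*} [Fintype m] [DecidableEq m]
    (A : Matrix m m ℂ) (t : ℝ) : Matrix m m ℂ :=
  if t = 0 then 1 else if t = 1 then A else
    Matrix.of fun i j => ∫ s in Set.Ioi (0 : ℝ),
      (((Real.sin (t * Real.pi) / Real.pi) * s ^ (t - 1)) •
        (A * (A + (s : ℂ) • (1 : Matrix m m ℂ))⁻¹)) i j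

/-- The weighted geometric mean `A ♯ₜ B = A^(1/2) (A^(-1/2) B A^(-1/2))^t A^(1/2)`
of (strictly accretive) matrices. -/
noncomputable def gmean {m : Type*} [Fintype m] [DecidableEq m]
    (A : Matrix m m ℂ) (t : ℝ) (B : Matrix m m ℂ) : Matrix m m ℂ :=
  apow A (1/2) * apow ((apow A (1/2))⁻¹ * B * (apow A (1/2))⁻¹) t * apow A (1/2)

/-- The absolute value `|X| = (Xᴴ X)^(1/2)` of a matrix. -/
noncomputable def absM {m : Type*} [Fintype m] [DecidableEq m]
    (X : Matrix m m ℂ) : Matrix m m ℂ :=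
  (Matrix.posSemidef_conjTranspose_mul_self X).1.eigenvectorUnitary.1 *
    Matrix.diagonal ((↑) ∘ Real.sqrt ∘ (Matrix.posSemidef_conjTranspose_mul_self X).1.eigenvalues) *
    (star (Matrix.posSemidef_conjTranspose_mul_self X).1.eigenvectorUnitary : Matrix m m ℂ)

/-- The `j`-th largest singular value of a complex matrix. -/
noncomputable def singVals {k : ℕ} (T : Matrix (Fin k) (Fin k) ℂ) (j : Fin k) : ℝ :=
  Real.sqrt (((Matrix.posSemidef_conjTranspose_mul_self T).1.eigenvalues ∘
    Tuple.sort (Matrix.posSemidef_conjTranspose_mul_self T).1.eigenvalues) j.rev)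

/-- The `j`-th largest eigenvalue of a Hermitian matrix (junk value `0` otherwise). -/
noncomputable def eigDesc {k : ℕ} (T : Matrix (Fin k) (Fin k) ℂ) (j : Fin k) : ℝ :=
  if h : T.IsHermitian then (h.eigenvalues ∘ Tuple.sort h.eigenvalues) j.rev else 0

/-- The numerical range of `A` lies in the sector
`S_α = {z : Re z ≥ 0, |Im z| ≤ tan α · Re z}`. -/
def InSector {k : ℕ} (α : ℝ) (A : Matrix (Fin k) (Fin k) ℂ) : Prop :=
  ∀ x : EuclideanSpace ℂ (Fin k), ‖x‖ = 1 →
    0 ≤ (star (x : Fin k → ℂ) ⬝ᵥ A.mulVec (x : Fin k → ℂ)).re ∧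
      |(star (x : Fin k → ℂ) ⬝ᵥ A.mulVec (x : Fin k → ℂ)).im| ≤
        Real.tan α * (star (x : Fin k → ℂ) ⬝ᵥ A.mulVec (x : Fin k → ℂ)).re

lemma isUnit_of_mre_posDef {n : ℕ} {B : Matrix (Fin n) (Fin n) ℂ}
    (hB : (mre B).PosDef) : IsUnit B := by
  rw [← Matrix.mulVec_injective_iff_isUnit]
  have key : ∀ x, B.mulVec x = 0 → x = 0 := by
    intro x hx
    by_contra hx0
    have h1 := hB.dotProduct_mulVec_pos hx0
    have h2 : star x ⬝ᵥ (mre B) *ᵥ x = 0 := by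
      have hBH : star x ⬝ᵥ Bᴴ *ᵥ x = 0 := by
        rw [Matrix.dotProduct_mulVec, ← Matrix.star_mulVec, hx]
        simp
      have hBx : star x ⬝ᵥ B *ᵥ x = 0 := by rw [hx]; simp
      simp [mre, Matrix.add_mulVec, Matrix.smul_mulVec, dotProduct_add,
        dotProduct_smul, hBH, hBx]
    rw [h2] at h1
    exact lt_irrefl 0 h1
  intro x y h
  have := key (x - y) (by rw [Matrix.mulVec_sub, h, sub_self])
  exact sub_eq_zero.mp this

lemma key_inv {n : ℕ} {B : Matrix (Fin n) (Fin n) ℂ}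
    (hB : (mre B).PosDef) : ((mre B)⁻¹ - mre B⁻¹).PosSemidef := by
  set H := mre B with hHdef
  set G := H⁻¹ with hGdef
  set C := B⁻¹ with hCdef
  have hu : IsUnit B := isUnit_of_mre_posDef hB
  have e1 : B * C = 1 := Matrix.mul_nonsing_inv B ((Matrix.isUnit_iff_isUnit_det B).mp hu)
  have e2 : C * B = 1 := Matrix.nonsing_inv_mul B ((Matrix.isUnit_iff_isUnit_det B).mp hu)
  have e3 : Bᴴ * Cᴴ = 1 := by rw [← Matrix.conjTranspose_mul, e2, Matrix.conjTranspose_one]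
  have e4 : Cᴴ * Bᴴ = 1 := by rw [← Matrix.conjTranspose_mul, e1, Matrix.conjTranspose_one]
  have e5 : H * G = 1 := Matrix.mul_nonsing_inv H ((Matrix.isUnit_iff_isUnit_det H).mp hB.isUnit)
  have e6 : G * H = 1 := Matrix.nonsing_inv_mul H ((Matrix.isUnit_iff_isUnit_det H).mp hB.isUnit)
  have e7 : Hᴴ = H := hB.isHermitian
  have e8 : Gᴴ = G := hB.isHermitian.inv
  have f1 : ∀ M : Matrix (Fin n) (Fin n) ℂ, B * (C * M) = M := fun M => by
    rw [← mul_assoc, e1, one_mul]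
  have f2 : ∀ M : Matrix (Fin n) (Fin n) ℂ, C * (B * M) = M := fun M => by
    rw [← mul_assoc, e2, one_mul]
  have f3 : ∀ M : Matrix (Fin n) (Fin n) ℂ, Bᴴ * (Cᴴ * M) = M := fun M => by
    rw [← mul_assoc, e3, one_mul]
  have f4 : ∀ M : Matrix (Fin n) (Fin n) ℂ, Cᴴ * (Bᴴ * M) = M := fun M => by
    rw [← mul_assoc, e4, one_mul]
  have f5 : ∀ M : Matrix (Fin n) (Fin n) ℂ, H * (G * M) = M := fun M => by
    rw [← mul_assoc, e5, one_mul]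
  have f6 : ∀ M : Matrix (Fin n) (Fin n) ℂ, G * (H * M) = M := fun M => by
    rw [← mul_assoc, e6, one_mul]
  have e9 : B + Bᴴ = H + H := by
    rw [hHdef]
    show B + Bᴴ = (1/2 : ℂ) • (B + Bᴴ) + (1/2 : ℂ) • (B + Bᴴ)
    rw [← add_smul]; norm_num
  have h2 : C * (H * Cᴴ) + C * (H * Cᴴ) = C + Cᴴ := by
    have : C * ((H + H) * Cᴴ) = C * ((B + Bᴴ) * Cᴴ) := by rw [← e9]
    simp only [add_mul, mul_add, mul_assoc, e3, mul_one, f2] at this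
    rw [this, add_comm]
  have hmreC : mre C = C * (H * Cᴴ) := by
    show (1/2 : ℂ) • (C + Cᴴ) = C * (H * Cᴴ)
    rw [← h2, ← two_smul ℂ (C * (H * Cᴴ)), smul_smul]
    norm_num
  have key : G - mre C = (C * (B - H)) * G * (C * (B - H))ᴴ := by
    rw [hmreC]
    simp only [Matrix.conjTranspose_mul, Matrix.conjTranspose_sub, e7, mul_sub, sub_mul,
      mul_add, add_mul, mul_assoc, e1, e2, e3, e4, e5, e6, mul_one, one_mul,
      f1, f2, f3, f4, f5, f6, Matrix.conjTranspose_one]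
    have aux : G - C * (H * Cᴴ) - (G - C - (Cᴴ - C * (H * Cᴴ))) =
        (C + Cᴴ) - (C * (H * Cᴴ) + C * (H * Cᴴ)) := by abel
    rw [h2, sub_self] at aux
    exact sub_eq_zero.mp aux
  rw [key]
  exact (hB.inv.posSemidef).mul_mul_conjTranspose_same _

lemma mre_fromBlocks {n : ℕ} (A B X : Matrix (Fin n) (Fin n) ℂ) :
    mre (Matrix.fromBlocks A X Xᴴ B) = Matrix.fromBlocks (mre A) X Xᴴ (mre B) := by
  have hX : (1/2 : ℂ) • (X + X) = X := by
    rw [← two_smul ℂ X, smul_smul]; norm_num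
  have hXH : (1/2 : ℂ) • (Xᴴ + Xᴴ) = Xᴴ := by
    rw [← two_smul ℂ Xᴴ, smul_smul]; norm_num
  unfold mre
  rw [Matrix.fromBlocks_conjTranspose, Matrix.conjTranspose_conjTranspose,
    Matrix.fromBlocks_add, Matrix.fromBlocks_smul, hX, hXH]

lemma mre_sub {n : ℕ} (A M : Matrix (Fin n) (Fin n) ℂ) :
    mre (A - M) = mre A - mre M := by
  unfold mre
  rw [Matrix.conjTranspose_sub, ← smul_sub]
  congr 1
  abel

lemma mre_conj {n : ℕ} (X C : Matrix (Fin n) (Fin n) ℂ) :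
    mre (X * C * Xᴴ) = X * mre C * Xᴴ := by
  unfold mre
  rw [Matrix.conjTranspose_mul, Matrix.conjTranspose_mul, Matrix.conjTranspose_conjTranspose,
    Matrix.mul_smul, Matrix.smul_mul, mul_add, add_mul, mul_assoc, mul_assoc X Cᴴ Xᴴ]

/-- If `A, B` have positive definite real parts and the block matrix
`[[A, X], [Xᴴ, B]]` is accretive, then `A - X B⁻¹ Xᴴ` is accretive. -/
theorem stmt0 {n : ℕ} (A B X : Matrix (Fin n) (Fin n) ℂ)
    (hA : (mre A).PosDef) (hB : (mre B).PosDef)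
    (hM : Accretive (Matrix.fromBlocks A X Xᴴ B)) :
    Accretive (A - X * B⁻¹ * Xᴴ) := by
  unfold Accretive at hM ⊢
  rw [mre_fromBlocks] at hM
  have : Invertible (mre B) := hB.isUnit.invertible
  have hschur : (mre A - X * (mre B)⁻¹ * Xᴴ).PosSemidef :=
    (Matrix.PosDef.fromBlocks₂₂ (mre A) X hB).mp hM
  have hkey : ((mre B)⁻¹ - mre B⁻¹).PosSemidef := key_inv hB
  have hX : (X * ((mre B)⁻¹ - mre B⁻¹) * Xᴴ).PosSemidef :=
    hkey.mul_mul_conjTranspose_same X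
  have hsum := hschur.add hX
  have heq : mre A - X * (mre B)⁻¹ * Xᴴ + X * ((mre B)⁻¹ - mre B⁻¹) * Xᴴ =
      mre (A - X * B⁻¹ * Xᴴ) := by
    rw [mre_sub, mre_conj, mul_sub, sub_mul]
    abel
  rwa [heq] at hsum
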